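/- Let n ≥ 5, let G = GL_n(F_2) acting naturally on V = F_2^n, let H be the stabilizer in G of a nonzero vector of V, and let K be the stabilizer in G of an (n-1)-dimensional subspace of V. Then for all g_1, …, g_{n-1} ∈ G and h_1, …, h_{n-2} ∈ G, the intersection (⋂_{i=1}^{n-1} g_i H g_i^{-1}) ∩ (⋂_{j=1}^{n-2} h_j K h_j^{-1}) is nontrivial; that is, the (2n-3)-tuple consisting of n-1 copies of H and n-2 copies of K is non-regular. -/

import Mathlib

open Matrix

/-- The conjugate `g H g⁻¹` of a subgroup `H` by an element `g`. -/
def conjSub {G : Type*} [Group G] (g : G) (H : Subgroup G) : Subgroup G :=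
  H.map (MulAut.conj g).toMonoidHom

/-- The stabilizer in `GL(ι, F)` of a vector `v` of the natural module. -/
def glVecStab {ι F : Type*} [Fintype ι] [DecidableEq ι] [CommRing F]
    (v : ι → F) : Subgroup (Matrix.GeneralLinearGroup ι F) where
  carrier := {g | (↑g : Matrix ι ι F) *ᵥ v = v}
  one_mem' := by simp
  mul_mem' := by
    intro a b ha hb
    rw [Set.mem_setOf_eq] at ha hb ⊢
    rw [Units.val_mul, ← Matrix.mulVec_mulVec, hb, ha]
  inv_mem' := by
    intro a ha
    rw [Set.mem_setOf_eq] at ha ⊢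
    conv_lhs => rw [← ha]
    rw [Matrix.mulVec_mulVec, ← Units.val_mul, inv_mul_cancel]
    simp
  
/-- The stabilizer in `GL(ι, F)` of a subspace `W` of the natural module. -/
def glSubspaceStab {ι F : Type*} [Fintype ι] [DecidableEq ι] [CommRing F]
    (W : Submodule F (ι → F)) : Subgroup (Matrix.GeneralLinearGroup ι F) where
  carrier := {g | ∀ v : ι → F, v ∈ W ↔ (↑g : Matrix ι ι F) *ᵥ v ∈ W}
  one_mem' := by intro v; simp
  mul_mem' := by
    intro a b ha hb v
    rw [hb v]
    simpa [Matrix.mulVec_mulVec, Units.val_mul] using ha ((↑b : Matrix ι ι F) *ᵥ v)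
  inv_mem' := by
    intro a ha v
    have key : (↑a : Matrix ι ι F) *ᵥ ((↑(a⁻¹) : Matrix ι ι F) *ᵥ v) = v := by
      rw [Matrix.mulVec_mulVec, ← Units.val_mul, mul_inv_cancel]
      simp
    have := ha ((↑(a⁻¹) : Matrix ι ι F) *ᵥ v)
    rw [key] at this
    exact this.symm

section Aux

open Module Submodule

variable {n : ℕ}

/-- The transvection `x ↦ x + φ x • w` as a linear map. -/
noncomputable def transv (φ : Module.Dual (ZMod 2) (Fin n → ZMod 2))
    (w : Fin n → ZMod 2) : (Fin n → ZMod 2) →ₗ[ZMod 2] (Fin n → ZMod 2) :=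
  LinearMap.id + φ.smulRight w

lemma transv_apply (φ : Module.Dual (ZMod 2) (Fin n → ZMod 2))
    (w x : Fin n → ZMod 2) : transv φ w x = x + φ x • w := rfl

lemma transv_comp_self (φ : Module.Dual (ZMod 2) (Fin n → ZMod 2))
    (w : Fin n → ZMod 2) (hw : φ w = 0) :
    (transv φ w).comp (transv φ w) = LinearMap.id := by
  apply LinearMap.ext
  intro x
  rw [LinearMap.comp_apply, transv_apply, transv_apply, LinearMap.id_apply]
  have h1 : φ (x + φ x • w) = φ x := by
    rw [map_add, _root_.map_smul, hw, smul_zero, add_zero]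
  have h2 : φ x + φ x = 0 := CharTwo.add_self_eq_zero _
  rw [h1, add_assoc, ← add_smul, h2, zero_smul, add_zero]

end Aux

theorem gln2_tuple_nonregular (n : ℕ) (hn : 5 ≤ n)
    (v : Fin n → ZMod 2) (hv : v ≠ 0)
    (W : Submodule (ZMod 2) (Fin n → ZMod 2))
    (hW : Module.finrank (ZMod 2) ↥W = n - 1) :
    ∀ (g : Fin (n - 1) → Matrix.GeneralLinearGroup (Fin n) (ZMod 2))
      (h : Fin (n - 2) → Matrix.GeneralLinearGroup (Fin n) (ZMod 2)),
      (⨅ i, conjSub (g i) (glVecStab v)) ⊓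
        (⨅ j, conjSub (h j) (glSubspaceStab W)) ≠ ⊥ := by
  intro g h
  haveI : Fact (Nat.Prime 2) := ⟨by norm_num⟩
  have hVrank : Module.finrank (ZMod 2) (Fin n → ZMod 2) = n := by
    simp [Module.finrank_pi]
  -- the translated vectors
  set vi : Fin (n - 1) → (Fin n → ZMod 2) :=
    fun i => (↑(g i) : Matrix (Fin n) (Fin n) (ZMod 2)) *ᵥ v with hvi
  -- span of the vi is proper
  have hUlt : Submodule.span (ZMod 2) (Set.range vi) < ⊤ := by
    apply span_lt_top_of_card_lt_finrank
    rw [hVrank]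
    calc (Set.range vi).toFinset.card ≤ Fintype.card (Fin (n-1)) := by
          rw [Set.toFinset_card]; exact Fintype.card_range_le vi
      _ = n - 1 := Fintype.card_fin _
      _ < n := by omega
  -- a nonzero functional vanishing on all vi
  obtain ⟨φ, hφ0, hφbot⟩ :=
    Submodule.exists_dual_map_eq_bot_of_lt_top hUlt inferInstance
  have hφvi : ∀ i, φ (vi i) = 0 := by
    intro i
    have : φ (vi i) ∈ (Submodule.span (ZMod 2) (Set.range vi)).map φ :=
      Submodule.mem_map_of_mem (Submodule.subset_span ⟨i, rfl⟩)
    rwa [hφbot, Submodule.mem_bot] at this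
  -- the translated hyperplanes
  set Wj : Fin (n - 2) → Submodule (ZMod 2) (Fin n → ZMod 2) :=
    fun j => W.map (Matrix.mulVecLin (↑(h j) : Matrix (Fin n) (Fin n) (ZMod 2))) with hWj
  have hWjrank : ∀ j, Module.finrank (ZMod 2) (Wj j) = n - 1 := by
    intro j
    have := LinearEquiv.finrank_map_eq
      (Matrix.GeneralLinearGroup.toLin (h j)).toLinearEquiv W
    have e : (↑(Matrix.GeneralLinearGroup.toLin (h j)).toLinearEquiv :
        (Fin n → ZMod 2) →ₗ[ZMod 2] (Fin n → ZMod 2)) =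
        Matrix.mulVecLin (↑(h j) : Matrix (Fin n) (Fin n) (ZMod 2)) := by
      ext x; simp [Matrix.GeneralLinearGroup.coe_toLin]
    rw [e] at this
    simpa [hWj] using this.trans hW
  -- functionals cutting out the hyperplanes
  have hWjlt : ∀ j, Wj j < ⊤ := by
    intro j
    apply Submodule.lt_top_of_finrank_lt_finrank
    rw [hWjrank j, hVrank]; omega
  choose ψ hψ0 hψbot using fun j =>
    Submodule.exists_dual_map_eq_bot_of_lt_top (hWjlt j) inferInstance
  have hWjker : ∀ j, LinearMap.ker (ψ j) = Wj j := by
    intro j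
    have hle : Wj j ≤ LinearMap.ker (ψ j) := by
      intro x hx
      have : ψ j x ∈ (Wj j).map (ψ j) := Submodule.mem_map_of_mem hx
      rwa [hψbot, Submodule.mem_bot] at this
    have hker : Module.finrank (ZMod 2) (LinearMap.ker (ψ j)) ≤ n - 1 := by
      have hrange : LinearMap.range (ψ j) ≠ ⊥ := by
        simp only [ne_eq, LinearMap.range_eq_bot]; exact hψ0 j
      have h1 : 0 < Module.finrank (ZMod 2) (LinearMap.range (ψ j)) := by
        rw [pos_iff_ne_zero]
        intro h0
        exact hrange (Submodule.finrank_eq_zero.mp h0)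
      have := LinearMap.finrank_range_add_finrank_ker (ψ j)
      rw [hVrank] at this
      omega
    exact ((Submodule.eq_of_le_of_finrank_le hle (by rw [hWjrank j]; exact hker))).symm
  -- find a common nonzero kernel vector
  set L : (Fin n → ZMod 2) →ₗ[ZMod 2] (Fin (n - 2) → ZMod 2) × ZMod 2 :=
    LinearMap.prod (LinearMap.pi ψ) φ with hL
  have hkerL : LinearMap.ker L ≠ ⊥ := by
    intro hbot
    have hinj := LinearMap.ker_eq_bot.mp hbot
    have := LinearMap.finrank_le_finrank_of_injective hinj
    rw [hVrank] at this
    simp only [Module.finrank_prod, Module.finrank_pi, Module.finrank_self,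
      Fintype.card_fin] at this
    omega
  obtain ⟨w, hwker, hw0'⟩ := Submodule.exists_mem_ne_zero_of_ne_bot hkerL
  rw [LinearMap.mem_ker, hL] at hwker
  have hψw : ∀ j, ψ j w = 0 := by
    intro j
    have := congrArg (fun p => p.1 j) hwker
    simpa using this
  have hφw : φ w = 0 := by
    have := congrArg Prod.snd hwker
    simpa using this
  have hwWj : ∀ j, w ∈ Wj j := fun j => (hWjker j) ▸ LinearMap.mem_ker.mpr (hψw j)
  -- the transvection as a matrix
  set M : Matrix (Fin n) (Fin n) (ZMod 2) := LinearMap.toMatrix' (transv φ w) with hM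
  have hMM : M * M = 1 := by
    rw [hM, ← LinearMap.toMatrix'_comp, transv_comp_self φ w hφw, LinearMap.toMatrix'_id]
  have hMv : ∀ x : Fin n → ZMod 2, M *ᵥ x = x + φ x • w := by
    intro x
    have h1 : M *ᵥ x = Matrix.toLin' M x := rfl
    rw [h1, hM, Matrix.toLin'_toMatrix', transv_apply]
  set t : Matrix.GeneralLinearGroup (Fin n) (ZMod 2) := ⟨M, M, hMM, hMM⟩ with ht
  have htval : (↑t : Matrix (Fin n) (Fin n) (ZMod 2)) = M := rfl
  -- t is nontrivial
  have ht1 : t ≠ 1 := by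
    intro heq
    obtain ⟨x, hx⟩ := DFunLike.ne_iff.mp hφ0
    have hMx : M *ᵥ x = x := by
      have h1 : (↑t : Matrix (Fin n) (Fin n) (ZMod 2)) = 1 := by rw [heq]; rfl
      rw [← htval, h1, Matrix.one_mulVec]
    rw [hMv x] at hMx
    have hz : φ x • w = 0 := by
      have := congrArg (fun y => y - x) hMx
      simpa [add_sub_cancel_left] using this
    rcases smul_eq_zero.mp hz with h' | h'
    · exact hx (by simpa using h')
    · exact hw0' h'
  -- t fixes each vi
  have htH : ∀ i, t ∈ conjSub (g i) (glVecStab v) := by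
    intro i
    refine ⟨(g i)⁻¹ * t * (g i), ?_, by simp [MulAut.conj_apply]; group⟩
    show (↑((g i)⁻¹ * t * (g i)) : Matrix (Fin n) (Fin n) (ZMod 2)) *ᵥ v = v
    rw [Units.val_mul, Units.val_mul, ← Matrix.mulVec_mulVec, ← Matrix.mulVec_mulVec]
    have h1 : (↑t : Matrix (Fin n) (Fin n) (ZMod 2)) *ᵥ
        ((↑(g i) : Matrix (Fin n) (Fin n) (ZMod 2)) *ᵥ v) = vi i := by
      rw [htval, hMv, show ((↑(g i) : Matrix (Fin n) (Fin n) (ZMod 2)) *ᵥ v) = vi i from rfl,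
        hφvi i, zero_smul, add_zero]
    rw [h1, hvi, Matrix.mulVec_mulVec, ← Units.val_mul, inv_mul_cancel, Units.val_one,
      Matrix.one_mulVec]
  -- t stabilizes each Wj
  have htK : ∀ j, t ∈ conjSub (h j) (glSubspaceStab W) := by
    intro j
    refine ⟨(h j)⁻¹ * t * (h j), ?_, by simp [MulAut.conj_apply]; group⟩
    intro x
    obtain ⟨u, huW, hu⟩ := hwWj j
    have hu' : (↑(h j) : Matrix (Fin n) (Fin n) (ZMod 2)) *ᵥ u = w := by
      rw [← Matrix.mulVecLin_apply]; exact hu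
    have key : (↑((h j)⁻¹ * t * (h j)) : Matrix (Fin n) (Fin n) (ZMod 2)) *ᵥ x
        = x + φ ((↑(h j) : Matrix (Fin n) (Fin n) (ZMod 2)) *ᵥ x) • u := by
      rw [Units.val_mul, Units.val_mul, ← Matrix.mulVec_mulVec, ← Matrix.mulVec_mulVec]
      rw [htval, hMv, Matrix.mulVec_add, Matrix.mulVec_smul, ← hu']
      rw [Matrix.mulVec_mulVec, Matrix.mulVec_mulVec,
        ← Units.val_mul, inv_mul_cancel, Units.val_one, Matrix.one_mulVec, Matrix.one_mulVec]
    show x ∈ W ↔ _ *ᵥ x ∈ W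
    rw [key]
    constructor
    · intro hx
      exact W.add_mem hx (W.smul_mem _ huW)
    · intro hx
      have := W.sub_mem hx
        (W.smul_mem (φ ((↑(h j) : Matrix (Fin n) (Fin n) (ZMod 2)) *ᵥ x)) huW)
      simpa [add_sub_cancel_right] using this
  -- conclude
  intro hbot
  have hmem : t ∈ (⨅ i, conjSub (g i) (glVecStab v)) ⊓
      (⨅ j, conjSub (h j) (glSubspaceStab W)) := by
    rw [Subgroup.mem_inf]
    exact ⟨Subgroup.mem_iInf.mpr htH, Subgroup.mem_iInf.mpr htK⟩
  rw [hbot, Subgroup.mem_bot] at hmem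
  exact ht1 hmem
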